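/- For x ∈ l² nonincreasing and m ∈ ℕ, let f_m(x) = (x1,…,xm,0,0,…). Then d(x, f_m(x))² = ∑_{i>m} xi², and for any x, y ∈ l² and any bijection b : ℕ → ℕ, d(ord(x), ord(y))² ≤ ∑_i (x_i - y_{b(i)})², where ord denotes decreasing rearrangement and d is the l² distance. -/

import Mathlib

open Finset in
/-- Key finite rearrangement bound: for antitone nonnegative `a c` and an injective
`f`, the matched sum over any finite set is at most `∑' j, a j * c j`. -/
lemma key_rearrange (a c : ℕ → ℝ) (ha0 : ∀ i, 0 ≤ a i) (hc0 : ∀ i, 0 ≤ c i)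
    (ha : Antitone a) (hc : Antitone c) (hsum : Summable fun i => a i * c i)
    (s : Finset ℕ) (f : ℕ → ℕ) (hf : Function.Injective f) :
    ∑ i ∈ s, a i * c (f i) ≤ ∑' j, a j * c j := by
  classical
  obtain ⟨N, hN⟩ := Finset.exists_nat_subset_range (s ∪ s.image f)
  have hsN : s ⊆ Finset.range N := fun i hi => hN (Finset.mem_union_left _ hi)
  have hfN : ∀ i ∈ s, f i < N := by
    intro i hi
    have : f i ∈ Finset.range N :=
      hN (Finset.mem_union_right _ (Finset.mem_image_of_mem f hi))
    simpa using this
  -- build an equiv between the subtypes of `Fin N`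
  let e : {j : Fin N // (j : ℕ) ∈ s} ≃ {j : Fin N // (j : ℕ) ∈ s.image f} := by
    refine Equiv.ofBijective (fun j => ⟨⟨f j.1, hfN _ j.2⟩, Finset.mem_image_of_mem f j.2⟩) ?_
    constructor
    · rintro ⟨j, hj⟩ ⟨k, hk⟩ h
      simp only [Subtype.mk.injEq, Fin.mk.injEq] at h
      exact Subtype.ext (Fin.val_injective (hf h))
    · rintro ⟨q, hq⟩
      obtain ⟨i, hi, hiq⟩ := Finset.mem_image.1 hq
      have hiN : i < N := by simpa using hsN hi
      exact ⟨⟨⟨i, hiN⟩, hi⟩, by simp [hiq]⟩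
  let π : Equiv.Perm (Fin N) := e.extendSubtype
  let σ : Equiv.Perm ℕ := π.extendDomain (Fin.equivSubtype)
  have hσ_fix : ∀ {n : ℕ}, ¬ n < N → σ n = n := fun h =>
    Equiv.Perm.extendDomain_apply_not_subtype π Fin.equivSubtype h
  have hσ_mem : ∀ i ∈ s, σ i = f i := by
    intro i hi
    have hiN : i < N := by simpa using hsN hi
    have h1 : σ i = ((Fin.equivSubtype (π (Fin.equivSubtype.symm ⟨i, hiN⟩))) : ℕ) :=
      Equiv.Perm.extendDomain_apply_subtype π Fin.equivSubtype hiN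
    have h2 : Fin.equivSubtype.symm ⟨i, hiN⟩ = (⟨i, hiN⟩ : Fin N) := rfl
    have h3 : π (⟨i, hiN⟩ : Fin N) = ↑(e ⟨⟨i, hiN⟩, hi⟩) :=
      Equiv.extendSubtype_apply_of_mem e (⟨i, hiN⟩ : Fin N) hi
    rw [h1, h2, h3]
    rfl
  have hsupp : {x | σ x ≠ x} ⊆ ↑(Finset.range N) := by
    intro x hx
    by_contra hxN
    exact hx (hσ_fix (by simpa using hxN))
  have hmono : MonovaryOn a c ↑(Finset.range N) := by
    refine Monovary.monovaryOn ?_ _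
    intro i j hij
    rcases le_or_gt j i with h | h
    · exact ha h
    · exact absurd (hc h.le) (not_le.2 hij)
  calc ∑ i ∈ s, a i * c (f i) = ∑ i ∈ s, a i * c (σ i) :=
        Finset.sum_congr rfl (fun i hi => by rw [hσ_mem i hi])
    _ ≤ ∑ i ∈ Finset.range N, a i * c (σ i) := by
        refine Finset.sum_le_sum_of_subset_of_nonneg hsN ?_
        intro i _ _
        exact mul_nonneg (ha0 i) (hc0 _)
    _ ≤ ∑ i ∈ Finset.range N, a i * c i :=
        hmono.sum_mul_comp_perm_le_sum_mul hsupp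
    _ ≤ ∑' j, a j * c j :=
        Summable.sum_le_tsum _ (fun i _ => mul_nonneg (ha0 i) (hc0 i)) hsum

/-- Truncation distance and the rearrangement inequality in `l²`:
`d(x, f_m x)² = ∑_{i ≥ m} x i ²`, and for decreasing rearrangements
(`ord x = x ∘ ex`, `ord y = y ∘ ey` with `ex, ey` bijections and the
compositions antitone), `d(ord x, ord y)² ≤ ∑ (x i - y (b i))²` for any
bijection `b`. -/
theorem stmt13 :
    (∀ (x : ℕ → ℝ) (m : ℕ), (∀ i, 0 ≤ x i) → Summable (fun i => x i ^ 2) →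
      (∑' i, (x i - if i < m then x i else 0) ^ 2) =
        ∑' i, if m ≤ i then x i ^ 2 else 0) ∧
    (∀ (x y : ℕ → ℝ) (ex ey : Equiv ℕ ℕ) (b : ℕ → ℕ), Function.Bijective b →
      (∀ i, 0 ≤ x i) → (∀ i, 0 ≤ y i) →
      Summable (fun i => x i ^ 2) → Summable (fun i => y i ^ 2) →
      Antitone (fun i => x (ex i)) → Antitone (fun i => y (ey i)) →
      (∑' i, (x (ex i) - y (ey i)) ^ 2) ≤ ∑' i, (x i - y (b i)) ^ 2) := by
  classical
  constructor
  · intro x m _ _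
    refine tsum_congr fun i => ?_
    by_cases h : i < m
    · simp [h, not_le.2 h]
    · simp [h, not_lt.1 h]
  · intro x y ex ey b hb hx0 hy0 hx2 hy2 hax hay
    have hxex2 : Summable fun i => x (ex i) ^ 2 := by
      have := (ex.summable_iff (f := fun i => x i ^ 2)).2 hx2
      simpa [Function.comp_def] using this
    have hyey2 : Summable fun i => y (ey i) ^ 2 := by
      have := (ey.summable_iff (f := fun i => y i ^ 2)).2 hy2
      simpa [Function.comp_def] using this
    have hyb2 : Summable fun i => y (b i) ^ 2 := by
      have := ((Equiv.ofBijective b hb).summable_iff (f := fun i => y i ^ 2)).2 hy2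
      simpa [Function.comp_def, Equiv.ofBijective] using this
    have hprod : Summable fun i => x i * y (b i) := by
      refine Summable.of_nonneg_of_le (fun i => mul_nonneg (hx0 i) (hy0 _))
        (fun i => ?_) ((hx2.add hyb2).div_const 2)
      have := two_mul_le_add_sq (x i) (y (b i))
      nlinarith [hx0 i, hy0 (b i)]
    have hprodo : Summable fun i => x (ex i) * y (ey i) := by
      refine Summable.of_nonneg_of_le (fun i => mul_nonneg (hx0 _) (hy0 _))
        (fun i => ?_) ((hxex2.add hyey2).div_const 2)
      have := two_mul_le_add_sq (x (ex i)) (y (ey i))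
      nlinarith [hx0 (ex i), hy0 (ey i)]
    -- expand the squares
    have expandL : (∑' i, (x (ex i) - y (ey i)) ^ 2) =
        (∑' i, x i ^ 2) + (∑' i, y i ^ 2) - 2 * ∑' i, x (ex i) * y (ey i) := by
      have h1 : ∀ i, (x (ex i) - y (ey i)) ^ 2 =
          (x (ex i) ^ 2 + y (ey i) ^ 2) - 2 * (x (ex i) * y (ey i)) := fun i => by ring
      rw [tsum_congr h1, Summable.tsum_sub (hxex2.add hyey2) (hprodo.mul_left 2),
        Summable.tsum_add hxex2 hyey2, tsum_mul_left, ex.tsum_eq (fun i => x i ^ 2),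
        ey.tsum_eq (fun i => y i ^ 2)]
    have expandR : (∑' i, (x i - y (b i)) ^ 2) =
        (∑' i, x i ^ 2) + (∑' i, y i ^ 2) - 2 * ∑' i, x i * y (b i) := by
      have h1 : ∀ i, (x i - y (b i)) ^ 2 =
          (x i ^ 2 + y (b i) ^ 2) - 2 * (x i * y (b i)) := fun i => by ring
      rw [tsum_congr h1, Summable.tsum_sub (hx2.add hyb2) (hprod.mul_left 2),
        Summable.tsum_add hx2 hyb2, tsum_mul_left]
      congr 2
      have := (Equiv.ofBijective b hb).tsum_eq (fun i => y i ^ 2)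
      simpa [Equiv.ofBijective] using this
    rw [expandL, expandR]
    have hkey : (∑' i, x i * y (b i)) ≤ ∑' i, x (ex i) * y (ey i) := by
      refine Summable.tsum_le_of_sum_le hprod fun s => ?_
      set a : ℕ → ℝ := fun j => x (ex j) with ha_def
      set c : ℕ → ℝ := fun j => y (ey j) with hc_def
      set f0 : ℕ → ℕ := fun j => ey.symm (b (ex j)) with hf0
      have hf0inj : Function.Injective f0 :=
        ey.symm.injective.comp (hb.injective.comp ex.injective)
      have hre : ∑ i ∈ s, x i * y (b i) = ∑ p ∈ s.image ex.symm, a p * c (f0 p) := by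
        rw [Finset.sum_image (fun i _ j _ h => ex.symm.injective h)]
        refine Finset.sum_congr rfl fun i _ => ?_
        simp [ha_def, hc_def, hf0]
      rw [hre]
      exact key_rearrange a c (fun i => hx0 _) (fun i => hy0 _) hax hay hprodo
        (s.image ex.symm) f0 hf0inj
    linarith
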